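/- arXiv:0910.1818 — 11 statements merged into one kernel-verified Lean document; each statement's English description precedes it below -/
import Mathlib

section
/- Let f, g, h : 𝕎 → 𝕍 be morphisms of 2-term L∞-algebras over a commutative unital ring K. If θ : W₀ → V₁ is a transformation from f to g and σ : W₀ → V₁ is a transformation from g to h, then the K-linear map θ + σ : W₀ → V₁ is a transformation from f to h. -/
/-- A 2-term L∞-algebra `[∂ : V₁ → V₀]` over a commutative unital ring `K`:
a `K`-linear map `d : V₁ →ₗ[K] V₀`, bilinear brackets
`br0 : V₀×V₀ → V₀`, `br01 : V₀×V₁ → V₁`, `br10 : V₁×V₀ → V₁`, and an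
antisymmetric trilinear Jacobiator `jac : V₀×V₀×V₀ → V₁`, satisfying the
axioms of Baez–Crans. -/
structure TwoTermL (K : Type*) [CommRing K] (V₁ V₀ : Type*)
    [AddCommGroup V₁] [Module K V₁] [AddCommGroup V₀] [Module K V₀] where
  d : V₁ →ₗ[K] V₀
  br0 : V₀ →ₗ[K] V₀ →ₗ[K] V₀
  br01 : V₀ →ₗ[K] V₁ →ₗ[K] V₁
  br10 : V₁ →ₗ[K] V₀ →ₗ[K] V₁
  jac : V₀ →ₗ[K] V₀ →ₗ[K] V₀ →ₗ[K] V₁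
  br0_antisymm : ∀ x y : V₀, br0 x y = - br0 y x
  br01_antisymm : ∀ (x : V₀) (h : V₁), br01 x h = - br10 h x
  d_br01 : ∀ (x : V₀) (h : V₁), d (br01 x h) = br0 x (d h)
  br01_d : ∀ h k : V₁, br01 (d h) k = br10 h (d k)
  jac_swap₁ : ∀ x y z : V₀, jac x y z = - jac y x z
  jac_swap₂ : ∀ x y z : V₀, jac x y z = - jac x z y
  d_jac : ∀ x y z : V₀,
    d (jac x y z) = br0 x (br0 y z) + br0 y (br0 z x) + br0 z (br0 x y)
  jac_d : ∀ (x y : V₀) (h : V₁),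
    jac x y (d h) = br01 x (br01 y h) + br01 y (br10 h x) + br10 h (br0 x y)
  coherence : ∀ w x y z : V₀,
    br10 (jac x y z) w - br10 (jac w x y) z + br10 (jac z w x) y
        - br10 (jac y z w) x
      = jac (br0 x y) z w + jac (br0 z w) x y + jac (br0 x z) w y
        + jac (br0 w y) x z + jac (br0 x w) y z + jac (br0 y z) x w

variable {K : Type*} [CommRing K]
variable {W₁ W₀ V₁ V₀ U₁ U₀ : Type*}
  [AddCommGroup W₁] [Module K W₁] [AddCommGroup W₀] [Module K W₀]
  [AddCommGroup V₁] [Module K V₁] [AddCommGroup V₀] [Module K V₀]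
  [AddCommGroup U₁] [Module K U₁] [AddCommGroup U₀] [Module K U₀]

/-- A (weak) morphism `f = (f₀, f₁, ε)` of 2-term L∞-algebras. -/
structure TwoTermMor (TW : TwoTermL K W₁ W₀) (TV : TwoTermL K V₁ V₀) where
  f₀ : W₀ →ₗ[K] V₀
  f₁ : W₁ →ₗ[K] V₁
  ε : W₀ →ₗ[K] W₀ →ₗ[K] V₁
  ε_antisymm : ∀ x y : W₀, ε x y = - ε y x
  compat_d : ∀ h : W₁, TV.d (f₁ h) = f₀ (TW.d h)
  compat_br0 : ∀ x y : W₀,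
    TV.br0 (f₀ x) (f₀ y) - f₀ (TW.br0 x y) = TV.d (ε x y)
  compat_br01 : ∀ (x : W₀) (k : W₁),
    TV.br01 (f₀ x) (f₁ k) - f₁ (TW.br01 x k) = ε x (TW.d k)
  compat_jac : ∀ x y z : W₀,
    TV.jac (f₀ x) (f₀ y) (f₀ z) - f₁ (TW.jac x y z)
      = ε x (TW.br0 y z) + ε y (TW.br0 z x) + ε z (TW.br0 x y)
        + TV.br01 (f₀ x) (ε y z) + TV.br01 (f₀ y) (ε z x)
        + TV.br01 (f₀ z) (ε x y)

/-- A transformation (L∞-homotopy) from the morphism `a` to the morphism `b`: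
a `K`-linear map `θ : W₀ → V₁` with `b₀ - a₀ = ∂∘θ`, `b₁ - a₁ = θ∘∂`, and
`[θx,θy] - θ[x,y] = ε_b(x,y) - ε_a(x,y) + [a₀y,θx] + [θy,a₀x]`,
where `[θx,θy] := [∂θx,θy]`. -/
def IsTransformation {TW : TwoTermL K W₁ W₀} {TV : TwoTermL K V₁ V₀}
    (a b : TwoTermMor TW TV) (θ : W₀ →ₗ[K] V₁) : Prop :=
  (∀ x : W₀, b.f₀ x - a.f₀ x = TV.d (θ x)) ∧
  (∀ h : W₁, b.f₁ h - a.f₁ h = θ (TW.d h)) ∧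
  (∀ x y : W₀,
    TV.br01 (TV.d (θ x)) (θ y) - θ (TW.br0 x y)
      = b.ε x y - a.ε x y + TV.br01 (a.f₀ y) (θ x) + TV.br10 (θ y) (a.f₀ x))

/-- A butterfly `B : 𝕎 → 𝕍` between 2-term L∞-algebras: a `K`-module `E` with
an antisymmetric bracket and linear maps `κ, ι, σ, ρ` such that both diagonals
are complexes, the NE–SW sequence `0 → V₁ → E → W₀ → 0` is short exact, and the
bracket compatibility axioms hold. -/
structure Butterfly (TW : TwoTermL K W₁ W₀) (TV : TwoTermL K V₁ V₀)
    (E : Type*) [AddCommGroup E] [Module K E] where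
  br : E →ₗ[K] E →ₗ[K] E
  br_antisymm : ∀ a b : E, br a b = - br b a
  κ : W₁ →ₗ[K] E
  ι : V₁ →ₗ[K] E
  σ : E →ₗ[K] W₀
  ρ : E →ₗ[K] V₀
  σ_κ : ∀ l : W₁, σ (κ l) = TW.d l
  ρ_ι : ∀ k : V₁, ρ (ι k) = TV.d k
  ρ_κ : ∀ l : W₁, ρ (κ l) = 0
  σ_ι : ∀ k : V₁, σ (ι k) = 0
  ι_inj : Function.Injective ι
  ker_σ_eq_range_ι : LinearMap.ker σ = LinearMap.range ι
  σ_surj : Function.Surjective σ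
  ρ_br : ∀ a b : E, ρ (br a b) = TV.br0 (ρ a) (ρ b)
  σ_br : ∀ a b : E, σ (br a b) = TW.br0 (σ a) (σ b)
  br_ι : ∀ (a : E) (h : V₁), br a (ι h) = ι (TV.br01 (ρ a) h)
  br_κ : ∀ (a : E) (l : W₁), br a (κ l) = κ (TW.br01 (σ a) l)
  jacobi : ∀ a b c : E,
    ι (TV.jac (ρ a) (ρ b) (ρ c)) + κ (TW.jac (σ a) (σ b) (σ c))
      = br a (br b c) + br b (br c a) + br c (br a b)

/-- Composition of transformations: if `θ` is a transformation from `f` to `g`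
and `τ` is a transformation from `g` to `h`, then `θ + τ` is a transformation
from `f` to `h`. -/
theorem transformation_composition
    {TW : TwoTermL K W₁ W₀} {TV : TwoTermL K V₁ V₀}
    (f g h : TwoTermMor TW TV) (θ τ : W₀ →ₗ[K] V₁)
    (hθ : IsTransformation f g θ) (hτ : IsTransformation g h τ) :
    IsTransformation f h (θ + τ) := by
  obtain ⟨hθ0, hθ1, hθ2⟩ := hθ
  obtain ⟨hτ0, hτ1, hτ2⟩ := hτ
  refine ⟨fun x => ?_, fun k => ?_, fun x y => ?_⟩
  · rw [LinearMap.add_apply, map_add, ← hθ0 x, ← hτ0 x]; abel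
  · rw [LinearMap.add_apply, ← hθ1 k, ← hτ1 k]; abel
  · have e1 := hθ2 x y
    have e2 := hτ2 x y
    -- cross term 1: [∂τx, θy] = -[∂θy, τx]
    have c1 : TV.br01 (TV.d (τ x)) (θ y) = - TV.br01 (TV.d (θ y)) (τ x) := by
      rw [TV.br01_d, TV.br01_antisymm (TV.d (θ y)) (τ x)]
      abel
    -- cross term 2: [∂θx, τy] = -[τy, ∂θx]
    have c2 : TV.br01 (TV.d (θ x)) (τ y) = - TV.br10 (τ y) (TV.d (θ x)) := by
      rw [TV.br01_antisymm]
    -- express ∂θ via g₀ - f₀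
    have d1 : TV.d (θ y) = g.f₀ y - f.f₀ y := (hθ0 y).symm
    have d2 : TV.d (θ x) = g.f₀ x - f.f₀ x := (hθ0 x).symm
    have c1' : TV.br01 (TV.d (τ x)) (θ y)
        = TV.br01 (f.f₀ y) (τ x) - TV.br01 (g.f₀ y) (τ x) := by
      rw [c1, d1, map_sub, LinearMap.sub_apply]; abel
    have c2' : TV.br01 (TV.d (θ x)) (τ y)
        = TV.br10 (τ y) (f.f₀ x) - TV.br10 (τ y) (g.f₀ x) := by
      rw [c2, d2, map_sub]; abel
    simp only [LinearMap.add_apply, map_add]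
    rw [c1', c2', sub_eq_iff_eq_add] at *
    rw [e1, e2]
    abel
end

section
/- Let f = (f₀,f₁,ε) : 𝕎 → 𝕍 be a morphism of 2-term L∞-algebras over a commutative unital ring K. Equip E := V₁ ⊕ W₀ with the bracket [(k,x),(l,y)] := ([∂k,l] + [f₀x,l] + [k,f₀y] + ε(x,y), [x,y]) and the maps κ(l) = (−f₁l, ∂l), ι(k) = (k,0), σ(k,x) = x, ρ(k,x) = ∂k + f₀x. Then (E, [·,·], κ, ι, σ, ρ) is a butterfly from 𝕎 to 𝕍; in particular σ∘κ = ∂_W, ρ∘ι = ∂_V, ρ∘κ = 0, σ∘ι = 0, the sequence 0 → V₁ →(ι) E →(σ) W₀ → 0 is short exact, and all the bracket compatibility axioms of a butterfly hold. -/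
variable {K : Type*} [CommRing K]
variable {W₁ W₀ V₁ V₀ U₁ U₀ : Type*}
  [AddCommGroup W₁] [Module K W₁] [AddCommGroup W₀] [Module K W₀]
  [AddCommGroup V₁] [Module K V₁] [AddCommGroup V₀] [Module K V₀]
  [AddCommGroup U₁] [Module K U₁] [AddCommGroup U₀] [Module K U₀]

namespace TwoTermL

lemma br01_d_swap (TV : TwoTermL K V₁ V₀) (h k : V₁) :
    TV.br01 (TV.d h) k = - TV.br01 (TV.d k) h := by
  linear_combination (norm := module) TV.br01_d h k + TV.br01_antisymm (TV.d k) h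

lemma d_br10 (TV : TwoTermL K V₁ V₀) (h : V₁) (u : V₀) :
    TV.d (TV.br10 h u) = TV.br0 (TV.d h) u := by
  have h2 := congrArg TV.d (TV.br01_antisymm u h)
  simp only [map_neg] at h2
  linear_combination (norm := module) h2 - TV.d_br01 u h - TV.br0_antisymm (TV.d h) u

lemma jac_cyc (TV : TwoTermL K V₁ V₀) (a b c : V₀) :
    TV.jac a b c = TV.jac b c a := by
  linear_combination (norm := module) TV.jac_swap₁ a b c - TV.jac_swap₂ b a c

lemma jacd (TV : TwoTermL K V₁ V₀) (u v : V₀) (h : V₁) :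
    TV.jac u v (TV.d h)
      = TV.br01 u (TV.br01 v h) - TV.br01 v (TV.br01 u h)
        - TV.br01 (TV.br0 u v) h := by
  have h2 := congrArg (TV.br01 v) (TV.br01_antisymm u h)
  simp only [map_neg] at h2
  have h3 := TV.br01_antisymm (TV.br0 u v) h
  linear_combination (norm := module) TV.jac_d u v h + h2 + h3

end TwoTermL

namespace TwoTermL

-- h1
lemma jac_ddd (TV : TwoTermL K V₁ V₀) (k l m : V₁) :
    TV.jac (TV.d k) (TV.d l) (TV.d m)
      = TV.br01 (TV.d k) (TV.br01 (TV.d l) m)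
        + TV.br01 (TV.d l) (TV.br01 (TV.d m) k)
        + TV.br01 (TV.d m) (TV.br01 (TV.d k) l) := by
  have j := TV.jacd (TV.d k) (TV.d l) m
  have c1 := congrArg (TV.br01 (TV.d l)) (TV.br01_d_swap k m)
  simp only [map_neg] at c1
  have c2 := congrArg (fun t => TV.br01 t m) (TV.d_br01 (TV.d k) l)
  have c3 := TV.br01_d_swap (TV.br01 (TV.d k) l) m
  linear_combination (norm := module) j - c1 + c2 - c3

-- h2 : jac (dk)(dl) z
lemma jac_ddz (TV : TwoTermL K V₁ V₀) (k l : V₁) (z : V₀) :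
    TV.jac (TV.d k) (TV.d l) z
      = TV.br01 z (TV.br01 (TV.d k) l) - TV.br01 (TV.d k) (TV.br01 z l)
        + TV.br01 (TV.d l) (TV.br01 z k) := by
  have e : TV.jac (TV.d k) (TV.d l) z = TV.jac z (TV.d k) (TV.d l) :=
    (TV.jac_cyc z (TV.d k) (TV.d l)).symm
  have j := TV.jacd z (TV.d k) l
  have c2 := congrArg (fun t => TV.br01 t l) (TV.d_br01 z k)
  have c3 := TV.br01_d_swap (TV.br01 z k) l
  linear_combination (norm := module) e + j + c2 - c3

-- h3 : jac (dk) y (dm)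
lemma jac_dyd (TV : TwoTermL K V₁ V₀) (k m : V₁) (y : V₀) :
    TV.jac (TV.d k) y (TV.d m)
      = TV.br01 y (TV.br01 (TV.d m) k) - TV.br01 (TV.d m) (TV.br01 y k)
        + TV.br01 (TV.d k) (TV.br01 y m) := by
  have e : TV.jac (TV.d k) y (TV.d m) = TV.jac y (TV.d m) (TV.d k) :=
    TV.jac_cyc (TV.d k) y (TV.d m)
  have j := TV.jacd y (TV.d m) k
  have c2 := congrArg (fun t => TV.br01 t k) (TV.d_br01 y m)
  have c3 := TV.br01_d_swap (TV.br01 y m) k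
  linear_combination (norm := module) e + j + c2 - c3

-- h4 : jac (dk) y z
lemma jac_dyz (TV : TwoTermL K V₁ V₀) (k : V₁) (y z : V₀) :
    TV.jac (TV.d k) y z
      = TV.br01 y (TV.br01 z k) - TV.br01 z (TV.br01 y k)
        - TV.br01 (TV.br0 y z) k := by
  have e : TV.jac (TV.d k) y z = TV.jac y z (TV.d k) := TV.jac_cyc (TV.d k) y z
  linear_combination (norm := module) e + TV.jacd y z k

-- h5 : jac x (dl) (dm)
lemma jac_xdd (TV : TwoTermL K V₁ V₀) (l m : V₁) (x : V₀) :
    TV.jac x (TV.d l) (TV.d m)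
      = TV.br01 x (TV.br01 (TV.d l) m) - TV.br01 (TV.d l) (TV.br01 x m)
        + TV.br01 (TV.d m) (TV.br01 x l) := by
  have j := TV.jacd x (TV.d l) m
  have c2 := congrArg (fun t => TV.br01 t m) (TV.d_br01 x l)
  have c3 := TV.br01_d_swap (TV.br01 x l) m
  linear_combination (norm := module) j + c2 - c3

-- h6 : jac x (dl) z
lemma jac_xdz (TV : TwoTermL K V₁ V₀) (l : V₁) (x z : V₀) :
    TV.jac x (TV.d l) z
      = TV.br01 z (TV.br01 x l) - TV.br01 x (TV.br01 z l)
        - TV.br01 (TV.br0 z x) l := by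
  have e : TV.jac x (TV.d l) z = TV.jac z x (TV.d l) :=
    (TV.jac_cyc z x (TV.d l)).symm
  linear_combination (norm := module) e + TV.jacd z x l

-- h7 : jac x y (dm)
lemma jac_xyd (TV : TwoTermL K V₁ V₀) (m : V₁) (x y : V₀) :
    TV.jac x y (TV.d m)
      = TV.br01 x (TV.br01 y m) - TV.br01 y (TV.br01 x m)
        - TV.br01 (TV.br0 x y) m := TV.jacd x y m

lemma jac_expand (TV : TwoTermL K V₁ V₀) (k l m : V₁) (x y z : V₀) :
    TV.jac (TV.d k + x) (TV.d l + y) (TV.d m + z)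
      = TV.jac x y z
        + TV.br01 (TV.d k + x) (TV.br01 (TV.d l + y) m)
        + TV.br01 (TV.d l + y) (TV.br01 (TV.d m + z) k)
        + TV.br01 (TV.d m + z) (TV.br01 (TV.d k + x) l)
        - TV.br01 (TV.d k + x) (TV.br01 z l)
        - TV.br01 (TV.d l + y) (TV.br01 x m)
        - TV.br01 (TV.d m + z) (TV.br01 y k)
        - TV.br01 (TV.br0 y z) k - TV.br01 (TV.br0 z x) l
        - TV.br01 (TV.br0 x y) m := by
  simp only [map_add, LinearMap.add_apply]
  linear_combination (norm := module) TV.jac_ddd k l m + TV.jac_ddz k l z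
    + TV.jac_dyd k m y + TV.jac_dyz k y z + TV.jac_xdd l m x
    + TV.jac_xdz l x z + TV.jac_xyd m x y

end TwoTermL

namespace MGB

variable (TW : TwoTermL K W₁ W₀) (TV : TwoTermL K V₁ V₀) (f : TwoTermMor TW TV)

def brE : (V₁ × W₀) →ₗ[K] (V₁ × W₀) →ₗ[K] (V₁ × W₀) :=
  LinearMap.mk₂ K
    (fun p q =>
      (TV.br01 (TV.d p.1) q.1 + TV.br01 (f.f₀ p.2) q.1
        + TV.br10 p.1 (f.f₀ q.2) + f.ε p.2 q.2,
       TW.br0 p.2 q.2))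
    (by
      intro p p' q
      refine Prod.ext ?_ ?_ <;>
        simp only [Prod.fst_add, Prod.snd_add, map_add, LinearMap.add_apply,
          Prod.mk_add_mk] <;> abel)
    (by
      intro c p q
      refine Prod.ext ?_ ?_ <;>
        simp only [Prod.smul_fst, Prod.smul_snd, map_smul, LinearMap.smul_apply,
          Prod.smul_mk, smul_add] <;> abel)
    (by
      intro p q q'
      refine Prod.ext ?_ ?_ <;>
        simp only [Prod.fst_add, Prod.snd_add, map_add, LinearMap.add_apply,
          Prod.mk_add_mk] <;> abel)
    (by
      intro c p q
      refine Prod.ext ?_ ?_ <;>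
        simp only [Prod.smul_fst, Prod.smul_snd, map_smul, LinearMap.smul_apply,
          Prod.smul_mk, smul_add] <;> abel)

@[simp] lemma brE_apply (p q : V₁ × W₀) :
    brE TW TV f p q
      = (TV.br01 (TV.d p.1) q.1 + TV.br01 (f.f₀ p.2) q.1
          + TV.br10 p.1 (f.f₀ q.2) + f.ε p.2 q.2,
         TW.br0 p.2 q.2) := rfl

end MGB

set_option maxHeartbeats 2000000 in
/-- The data associated to a morphism `f = (f₀,f₁,ε) : 𝕎 → 𝕍` of 2-term
L∞-algebras — the module `E = V₁ ⊕ W₀` with bracket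
`[(k,x),(l,y)] = ([∂k,l] + [f₀x,l] + [k,f₀y] + ε(x,y), [x,y])` and maps
`κ(l) = (−f₁l, ∂l)`, `ι(k) = (k,0)`, `σ(k,x) = x`, `ρ(k,x) = ∂k + f₀x` —
forms a butterfly from `𝕎` to `𝕍`. -/
theorem morphism_gives_butterfly
    (TW : TwoTermL K W₁ W₀) (TV : TwoTermL K V₁ V₀) (f : TwoTermMor TW TV) :
    ∃ B : Butterfly TW TV (V₁ × W₀),
      (∀ p q : V₁ × W₀,
        B.br p q
          = (TV.br01 (TV.d p.1) q.1 + TV.br01 (f.f₀ p.2) q.1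
              + TV.br10 p.1 (f.f₀ q.2) + f.ε p.2 q.2,
             TW.br0 p.2 q.2)) ∧
      (∀ l : W₁, B.κ l = (-(f.f₁ l), TW.d l)) ∧
      (∀ k : V₁, B.ι k = (k, 0)) ∧
      (∀ p : V₁ × W₀, B.σ p = p.2) ∧
      (∀ p : V₁ × W₀, B.ρ p = TV.d p.1 + f.f₀ p.2) := by
  classical
  refine ⟨{
      br := MGB.brE TW TV f
      br_antisymm := ?_
      κ := LinearMap.prod (-f.f₁) TW.d
      ι := LinearMap.inl K V₁ W₀
      σ := LinearMap.snd K V₁ W₀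
      ρ := TV.d ∘ₗ LinearMap.fst K V₁ W₀ + f.f₀ ∘ₗ LinearMap.snd K V₁ W₀
      σ_κ := fun l => rfl
      ρ_ι := ?_
      ρ_κ := ?_
      σ_ι := fun k => rfl
      ι_inj := LinearMap.inl_injective
      ker_σ_eq_range_ι := LinearMap.ker_snd K V₁ W₀
      σ_surj := fun x => ⟨(0, x), rfl⟩
      ρ_br := ?_
      σ_br := fun a b => rfl
      br_ι := ?_
      br_κ := ?_
      jacobi := ?_ },
    fun p q => rfl, fun l => rfl, fun k => rfl, fun p => rfl, fun p => rfl⟩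
  · -- br_antisymm
    rintro ⟨k, x⟩ ⟨l, y⟩
    refine Prod.ext ?_ ?_ <;>
      simp only [MGB.brE_apply, Prod.fst_neg, Prod.snd_neg]
    · linear_combination (norm := module) TV.br01_d_swap k l
        + TV.br01_antisymm (f.f₀ x) l + TV.br01_antisymm (f.f₀ y) k
        + f.ε_antisymm x y
    · exact TW.br0_antisymm x y
  · -- ρ_ι
    intro k
    simp
  · -- ρ_κ
    intro l
    simp [f.compat_d]
  · -- ρ_br
    rintro ⟨k, x⟩ ⟨l, y⟩
    have e1 := TV.d_br01 (TV.d k) l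
    have e2 := TV.d_br01 (f.f₀ x) l
    have e3 := TV.d_br10 k (f.f₀ y)
    have e4 := f.compat_br0 x y
    simp only [MGB.brE_apply, LinearMap.add_apply, LinearMap.comp_apply,
      LinearMap.fst_apply, LinearMap.snd_apply, map_add]
    linear_combination (norm := module) e1 + e2 + e3 - e4
  · -- br_ι
    rintro ⟨k, x⟩ h
    refine Prod.ext ?_ ?_ <;>
      simp only [MGB.brE_apply, LinearMap.inl_apply, LinearMap.add_apply,
        LinearMap.comp_apply, LinearMap.fst_apply, LinearMap.snd_apply,
        map_zero, map_add, LinearMap.add_apply, add_zero,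
        Prod.fst_add, Prod.snd_add, Prod.mk_add_mk]
    all_goals module
  · -- br_κ
    rintro ⟨k, x⟩ l
    have g1 := f.compat_br01 x l
    have g2a := TV.br01_d k (f.f₁ l)
    have g2b := congrArg (TV.br10 k) (f.compat_d l)
    refine Prod.ext ?_ ?_ <;>
      simp only [MGB.brE_apply, LinearMap.prod_apply, Function.prod,
        LinearMap.neg_apply, map_neg, LinearMap.snd_apply, LinearMap.fst_apply]
    · linear_combination (norm := module) -g1 - g2a - g2b
    · exact (TW.d_br01 x l).symm
  · -- jacobi
    rintro ⟨k, x⟩ ⟨l, y⟩ ⟨m, z⟩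
    have H0 := TV.jac_expand k l m (f.f₀ x) (f.f₀ y) (f.f₀ z)
    have Hjac := f.compat_jac x y z
    -- cycle 1 conversions
    have A11 := congrArg (TV.br01 (TV.d k)) (TV.br01_antisymm (f.f₀ z) l)
    have A21 := congrArg (TV.br01 (f.f₀ x)) (TV.br01_antisymm (f.f₀ z) l)
    have A31 := TV.br01_d_swap k (f.ε y z)
    have A41 := congrArg (fun t => TV.br01 t k) (f.compat_br0 y z)
    have A51 := TV.br01_antisymm (f.f₀ (TW.br0 y z)) k
    -- cycle 2
    have A12 := congrArg (TV.br01 (TV.d l)) (TV.br01_antisymm (f.f₀ x) m)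
    have A22 := congrArg (TV.br01 (f.f₀ y)) (TV.br01_antisymm (f.f₀ x) m)
    have A32 := TV.br01_d_swap l (f.ε z x)
    have A42 := congrArg (fun t => TV.br01 t l) (f.compat_br0 z x)
    have A52 := TV.br01_antisymm (f.f₀ (TW.br0 z x)) l
    -- cycle 3
    have A13 := congrArg (TV.br01 (TV.d m)) (TV.br01_antisymm (f.f₀ y) k)
    have A23 := congrArg (TV.br01 (f.f₀ z)) (TV.br01_antisymm (f.f₀ y) k)
    have A33 := TV.br01_d_swap m (f.ε x y)
    have A43 := congrArg (fun t => TV.br01 t m) (f.compat_br0 x y)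
    have A53 := TV.br01_antisymm (f.f₀ (TW.br0 x y)) m
    simp only [map_neg, map_sub, LinearMap.sub_apply] at A11 A21 A12 A22 A13 A23 A41 A42 A43
    simp only [map_add, LinearMap.add_apply] at H0 ⊢
    refine Prod.ext ?_ ?_ <;>
      simp only [MGB.brE_apply, LinearMap.inl_apply, LinearMap.prod_apply,
        Function.prod, LinearMap.neg_apply, LinearMap.add_apply, LinearMap.comp_apply,
        LinearMap.fst_apply, LinearMap.snd_apply, Prod.fst_add, Prod.snd_add,
        map_add, LinearMap.add_apply, zero_add, add_zero]
    · linear_combination (norm := module) H0 + Hjac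
        - A11 - A21 - A31 - A41 - A51
        - A12 - A22 - A32 - A42 - A52
        - A13 - A23 - A33 - A43 - A53
    · linear_combination (norm := module) TW.d_jac x y z
end

section
/- Let B = (E, [·,·], κ, ι, σ, ρ) be a butterfly from 𝕎 to 𝕍 between 2-term L∞-algebras over a commutative unital ring K, and let s : W₀ → E be a K-linear section of σ (σ∘s = id). Define f₀ := ρ∘s; let f₁ : W₁ → V₁ be the unique K-linear map with ι∘f₁ = s∘∂_W − κ (well-defined since σ∘(s∘∂_W − κ) = 0 and ι is injective with image ker σ); and let ε : W₀×W₀ → V₁ be the unique map with ι(ε(x,y)) = [s(x), s(y)] − s([x,y]) for all x,y ∈ W₀ (well-defined for the same reason). Then (f₀, f₁, ε) is a morphism of 2-term L∞-algebras from 𝕎 to 𝕍. -/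
variable {K : Type*} [CommRing K]
variable {W₁ W₀ V₁ V₀ U₁ U₀ : Type*}
  [AddCommGroup W₁] [Module K W₁] [AddCommGroup W₀] [Module K W₀]
  [AddCommGroup V₁] [Module K V₁] [AddCommGroup V₀] [Module K V₀]
  [AddCommGroup U₁] [Module K U₁] [AddCommGroup U₀] [Module K U₀]

/-- Given a butterfly `B : 𝕎 → 𝕍` and a `K`-linear section `s` of `σ`, the
data `f₀ := ρ∘s`, `f₁` determined by `ι∘f₁ = s∘∂_W − κ`, and `ε` determined by
`ι(ε(x,y)) = [s x, s y] − s [x,y]` is a morphism of 2-term L∞-algebras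
from `𝕎` to `𝕍`. -/
theorem butterfly_section_gives_morphism
    {TW : TwoTermL K W₁ W₀} {TV : TwoTermL K V₁ V₀} {E : Type*}
    [AddCommGroup E] [Module K E]
    (B : Butterfly TW TV E) (s : W₀ →ₗ[K] E) (hs : ∀ x : W₀, B.σ (s x) = x) :
    ∃ m : TwoTermMor TW TV,
      (∀ x : W₀, m.f₀ x = B.ρ (s x)) ∧
      (∀ h : W₁, B.ι (m.f₁ h) = s (TW.d h) - B.κ h) ∧
      (∀ x y : W₀, B.ι (m.ε x y) = B.br (s x) (s y) - s (TW.br0 x y)) := by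
  classical
  have memι : ∀ e : E, B.σ e = 0 → ∃ v, B.ι v = e := by
    intro e he
    have h' : e ∈ LinearMap.ker B.σ := he
    rw [B.ker_σ_eq_range_ι] at h'
    exact h'
  let invι : E → V₁ := fun e => if h : ∃ v, B.ι v = e then h.choose else 0
  have hinv : ∀ e : E, B.σ e = 0 → B.ι (invι e) = e := by
    intro e he
    have h := memι e he
    simp only [invι, dif_pos h]
    exact h.choose_spec
  have hσ1 : ∀ h : W₁, B.σ (s (TW.d h) - B.κ h) = 0 := by
    intro h; simp [hs, B.σ_κ]
  have hσ2 : ∀ x y : W₀, B.σ (B.br (s x) (s y) - s (TW.br0 x y)) = 0 := by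
    intro x y; simp [B.σ_br, hs]
  let f₁ : W₁ →ₗ[K] V₁ :=
  { toFun := fun h => invι (s (TW.d h) - B.κ h)
    map_add' := fun a b => B.ι_inj (by
      rw [map_add B.ι, hinv _ (hσ1 (a + b)), hinv _ (hσ1 a), hinv _ (hσ1 b)]
      simp only [map_add]; abel)
    map_smul' := fun c a => B.ι_inj (by
      rw [RingHom.id_apply, map_smul B.ι, hinv _ (hσ1 (c • a)), hinv _ (hσ1 a)]
      simp only [map_smul]
      rw [smul_sub]) }
  let ε : W₀ →ₗ[K] W₀ →ₗ[K] V₁ := LinearMap.mk₂ K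
    (fun x y => invι (B.br (s x) (s y) - s (TW.br0 x y)))
    (fun x x' y => B.ι_inj (by
      rw [map_add B.ι, hinv _ (hσ2 (x + x') y), hinv _ (hσ2 x y), hinv _ (hσ2 x' y)]
      simp only [map_add, LinearMap.add_apply]; abel))
    (fun c x y => B.ι_inj (by
      rw [map_smul B.ι, hinv _ (hσ2 (c • x) y), hinv _ (hσ2 x y)]
      simp only [map_smul, LinearMap.smul_apply]
      rw [smul_sub]))
    (fun x y y' => B.ι_inj (by
      rw [map_add B.ι, hinv _ (hσ2 x (y + y')), hinv _ (hσ2 x y), hinv _ (hσ2 x y')]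
      simp only [map_add]; abel))
    (fun c x y => B.ι_inj (by
      rw [map_smul B.ι, hinv _ (hσ2 x (c • y)), hinv _ (hσ2 x y)]
      simp only [map_smul]
      rw [smul_sub]))
  have hιf₁ : ∀ h : W₁, B.ι (f₁ h) = s (TW.d h) - B.κ h := fun h => hinv _ (hσ1 h)
  have hιε : ∀ x y : W₀, B.ι (ε x y) = B.br (s x) (s y) - s (TW.br0 x y) := fun x y =>
    hinv _ (hσ2 x y)
  refine ⟨⟨B.ρ ∘ₗ s, f₁, ε, ?_, ?_, ?_, ?_, ?_⟩, fun x => rfl, hιf₁, hιε⟩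
  · -- ε_antisymm
    intro x y
    apply B.ι_inj
    rw [map_neg, hιε, hιε, B.br_antisymm (s x) (s y), TW.br0_antisymm x y]
    simp only [map_neg]; abel
  · -- compat_d
    intro h
    rw [← B.ρ_ι, hιf₁]
    simp [B.ρ_κ]
  · -- compat_br0
    intro x y
    rw [← B.ρ_ι, hιε]
    simp [B.ρ_br]
  · -- compat_br01
    intro x k
    apply B.ι_inj
    simp only [map_sub, LinearMap.comp_apply]
    rw [← B.br_ι (s x), hιf₁, hιf₁, hιε]
    rw [map_sub (B.br (s x)), B.br_κ (s x) k, hs, TW.d_br01]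
    abel
  · -- compat_jac
    intro x y z
    apply B.ι_inj
    have hJ := B.jacobi (s x) (s y) (s z)
    simp only [hs] at hJ
    have hJ' : B.ι (TV.jac (B.ρ (s x)) (B.ρ (s y)) (B.ρ (s z)))
        = B.br (s x) (B.br (s y) (s z)) + B.br (s y) (B.br (s z) (s x))
          + B.br (s z) (B.br (s x) (s y)) - B.κ (TW.jac x y z) :=
      eq_sub_of_add_eq hJ
    simp only [map_sub, map_add, LinearMap.comp_apply]
    rw [hJ', hιf₁, ← B.br_ι (s x), ← B.br_ι (s y), ← B.br_ι (s z),
      hιε, hιε, hιε, hιε, hιε, hιε, TW.d_jac]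
    simp only [map_add, map_sub]
    abel
end

section
/- Let f = (f₀,f₁,ε) : 𝕎 → 𝕍 be a morphism of 2-term L∞-algebras over a commutative unital ring K, and let B_f be its associated butterfly on E = V₁ ⊕ W₀. Then the section s : W₀ → V₁ ⊕ W₀, s(x) = (0,x), of σ recovers f: namely ρ∘s = f₀; the unique map f₁' with ι∘f₁' = s∘∂_W − κ equals f₁; and the unique map ε' with ι(ε'(x,y)) = [s(x),s(y)] − s([x,y]) equals ε. -/
variable {K : Type*} [CommRing K]
variable {W₁ W₀ V₁ V₀ U₁ U₀ : Type*}
  [AddCommGroup W₁] [Module K W₁] [AddCommGroup W₀] [Module K W₀]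
  [AddCommGroup V₁] [Module K V₁] [AddCommGroup V₀] [Module K V₀]
  [AddCommGroup U₁] [Module K U₁] [AddCommGroup U₀] [Module K U₀]

/-- The bracket of the butterfly `B_f` on `V₁ ⊕ W₀` associated to a morphism `f`. -/
def bfBr {TW : TwoTermL K W₁ W₀} {TV : TwoTermL K V₁ V₀}
    (f : TwoTermMor TW TV) (p q : V₁ × W₀) : V₁ × W₀ :=
  (TV.br01 (TV.d p.1) q.1 + TV.br01 (f.f₀ p.2) q.1 + TV.br10 p.1 (f.f₀ q.2)
      + f.ε p.2 q.2,
    TW.br0 p.2 q.2)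

/-- The map `κ_f : W₁ → V₁ ⊕ W₀`, `κ_f(l) = (−f₁ l, ∂l)`, of the butterfly `B_f`. -/
def bfκ {TW : TwoTermL K W₁ W₀} {TV : TwoTermL K V₁ V₀}
    (f : TwoTermMor TW TV) (l : W₁) : V₁ × W₀ :=
  (-(f.f₁ l), TW.d l)

/-- The map `ι_f : V₁ → V₁ ⊕ W₀`, `ι_f(k) = (k, 0)`, of the butterfly `B_f`. -/
def bfι (k : V₁) : V₁ × W₀ := (k, 0)

/-- The map `σ_f : V₁ ⊕ W₀ → W₀`, `σ_f(k,x) = x`, of the butterfly `B_f`. -/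
def bfσ (p : V₁ × W₀) : W₀ := p.2

/-- The map `ρ_f : V₁ ⊕ W₀ → V₀`, `ρ_f(k,x) = ∂k + f₀x`, of the butterfly `B_f`. -/
def bfρ {TW : TwoTermL K W₁ W₀} {TV : TwoTermL K V₁ V₀}
    (f : TwoTermMor TW TV) (p : V₁ × W₀) : V₀ :=
  TV.d p.1 + f.f₀ p.2

/-- The canonical section `s : W₀ → V₁ ⊕ W₀`, `s(x) = (0,x)`, of `σ_f`. -/
def bfs (x : W₀) : V₁ × W₀ := ((0 : V₁), x)

/-- The section `s(x) = (0,x)` of `σ_f` of the butterfly `B_f` associated to a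
morphism `f` recovers `f`: `ρ_f ∘ s = f₀`; the unique `f₁'` with
`ι_f ∘ f₁' = s∘∂_W − κ_f` is `f₁`; and the unique `ε'` with
`ι_f(ε'(x,y)) = [s x, s y] − s [x,y]` is `ε`. -/
theorem canonical_section_recovers_morphism
    {TW : TwoTermL K W₁ W₀} {TV : TwoTermL K V₁ V₀} (f : TwoTermMor TW TV) :
    (∀ x : W₀, bfρ f (bfs x) = f.f₀ x) ∧
    (∀ h : W₁, bfι (f.f₁ h) = bfs (TW.d h) - bfκ f h) ∧
    (∀ f₁' : W₁ → V₁,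
      (∀ h : W₁, bfι (f₁' h) = bfs (TW.d h) - bfκ f h) →
        ∀ h : W₁, f₁' h = f.f₁ h) ∧
    (∀ x y : W₀,
      bfι (f.ε x y) = bfBr f (bfs x) (bfs y) - bfs (TW.br0 x y)) ∧
    (∀ ε' : W₀ → W₀ → V₁,
      (∀ x y : W₀, bfι (ε' x y) = bfBr f (bfs x) (bfs y) - bfs (TW.br0 x y)) →
        ∀ x y : W₀, ε' x y = f.ε x y) := by
  refine ⟨?_, ?_, ?_, ?_, ?_⟩
  · intro x; simp [bfρ, bfs]
  · intro h; simp [bfι, bfs, bfκ, Prod.ext_iff]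
  · intro f₁' hf h
    have := hf h
    simp [bfι, bfs, bfκ, Prod.ext_iff] at this
    exact this
  · intro x y
    simp [bfι, bfs, bfBr, Prod.ext_iff]
  · intro ε' hε x y
    have := hε x y
    simp [bfι, bfs, bfBr, Prod.ext_iff] at this
    exact this
end

section
/- Let B = (E, [·,·], κ, ι, σ, ρ) be a butterfly from 𝕎 to 𝕍 between 2-term L∞-algebras over a commutative unital ring K, let s : W₀ → E be a K-linear section of σ, and let f = (f₀,f₁,ε) be the induced morphism (f₀ = ρ∘s, ι∘f₁ = s∘∂_W − κ, ι(ε(x,y)) = [s(x),s(y)] − s([x,y])), with associated butterfly B_f on V₁ ⊕ W₀. Then the map Ψ : V₁ ⊕ W₀ → E, Ψ(k,x) := ι(k) + s(x), is an isomorphism of butterflies from B_f to B: Ψ is bijective, preserves brackets, and satisfies Ψ∘κ_f = κ, Ψ∘ι_f = ι, σ∘Ψ = σ_f, ρ∘Ψ = ρ_f. -/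
variable {K : Type*} [CommRing K]
variable {W₁ W₀ V₁ V₀ U₁ U₀ : Type*}
  [AddCommGroup W₁] [Module K W₁] [AddCommGroup W₀] [Module K W₀]
  [AddCommGroup V₁] [Module K V₁] [AddCommGroup V₀] [Module K V₀]
  [AddCommGroup U₁] [Module K U₁] [AddCommGroup U₀] [Module K U₀]

/-- Let `B : 𝕎 → 𝕍` be a butterfly, `s` a linear section of `σ`, and
`f = (f₀,f₁,ε)` the induced morphism. Then `Ψ(k,x) := ι(k) + s(x)` is an
isomorphism of butterflies from the associated butterfly `B_f` to `B`:
it is `K`-linear, bijective, preserves brackets, and commutes with the four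
structure maps. -/
theorem associated_butterfly_isomorphic
    {TW : TwoTermL K W₁ W₀} {TV : TwoTermL K V₁ V₀} {E : Type*}
    [AddCommGroup E] [Module K E]
    (B : Butterfly TW TV E) (s : W₀ →ₗ[K] E) (hs : ∀ x : W₀, B.σ (s x) = x)
    (f : TwoTermMor TW TV)
    (hf₀ : ∀ x : W₀, f.f₀ x = B.ρ (s x))
    (hf₁ : ∀ h : W₁, B.ι (f.f₁ h) = s (TW.d h) - B.κ h)
    (hε : ∀ x y : W₀, B.ι (f.ε x y) = B.br (s x) (s y) - s (TW.br0 x y)) :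
    ∀ Ψ : V₁ × W₀ → E, (∀ p : V₁ × W₀, Ψ p = B.ι p.1 + s p.2) →
      IsLinearMap K Ψ ∧
      Function.Bijective Ψ ∧
      (∀ p q : V₁ × W₀, Ψ (bfBr f p q) = B.br (Ψ p) (Ψ q)) ∧
      (∀ l : W₁, Ψ (bfκ f l) = B.κ l) ∧
      (∀ k : V₁, Ψ (bfι k) = B.ι k) ∧
      (∀ p : V₁ × W₀, B.σ (Ψ p) = bfσ p) ∧
      (∀ p : V₁ × W₀, B.ρ (Ψ p) = bfρ f p) := by
  intro Ψ hΨ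
  have hσ : ∀ p : V₁ × W₀, B.σ (Ψ p) = p.2 := by
    intro p
    rw [hΨ, map_add, B.σ_ι, hs, zero_add]
  refine ⟨⟨?_, ?_⟩, ⟨?_, ?_⟩, ?_, ?_, ?_, ?_, ?_⟩
  · intro p q
    simp only [hΨ, Prod.fst_add, Prod.snd_add, map_add]
    abel
  · intro c p
    simp only [hΨ, Prod.smul_fst, Prod.smul_snd, map_smul, smul_add]
  · -- injective
    intro p q hpq
    rw [hΨ, hΨ] at hpq
    have h2 : p.2 = q.2 := by
      have := congrArg B.σ hpq
      simpa [map_add, B.σ_ι, hs] using this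
    have h1 : B.ι p.1 = B.ι q.1 := by
      rw [h2] at hpq
      exact add_right_cancel hpq
    exact Prod.ext (B.ι_inj h1) h2
  · -- surjective
    intro e
    have hker : e - s (B.σ e) ∈ LinearMap.ker B.σ := by
      simp [LinearMap.mem_ker, map_sub, hs]
    rw [B.ker_σ_eq_range_ι] at hker
    obtain ⟨k, hk⟩ := hker
    refine ⟨(k, B.σ e), ?_⟩
    rw [hΨ]
    simp only
    rw [hk]
    abel
  · -- bracket
    intro p q
    obtain ⟨k, x⟩ := p
    obtain ⟨l, y⟩ := q
    simp only [hΨ, bfBr, map_add]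
    have e1 : B.br (B.ι k) (B.ι l) = B.ι (TV.br01 (TV.d k) l) := by
      rw [B.br_ι, B.ρ_ι]
    have e2 : B.br (s x) (B.ι l) = B.ι (TV.br01 (f.f₀ x) l) := by
      rw [B.br_ι, hf₀]
    have e3 : B.br (B.ι k) (s y) = B.ι (TV.br10 k (f.f₀ y)) := by
      rw [B.br_antisymm, B.br_ι, hf₀, TV.br01_antisymm, map_neg, neg_neg]
    have e4 : B.br (s x) (s y) = B.ι (f.ε x y) + s (TW.br0 x y) := by
      rw [hε]; abel
    simp only [LinearMap.add_apply]
    rw [e1, e2, e3, e4]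
    abel
  · intro l
    rw [hΨ, bfκ]
    simp only [map_neg]
    rw [hf₁]
    abel
  · intro k
    rw [hΨ, bfι]
    simp
  · intro p
    exact hσ p
  · intro p
    rw [hΨ, bfρ, map_add, B.ρ_ι, hf₀]
end

section
/- Let f = (f₀,f₁,ε_f) and g = (g₀,g₁,ε_g) be morphisms of 2-term L∞-algebras from 𝕎 to 𝕍 over a commutative unital ring K, and let θ : W₀ → V₁ be a transformation from g to f. Then the map Φ : V₁ ⊕ W₀ → V₁ ⊕ W₀, Φ(k,x) := (k + θ(x), x), is a morphism of butterflies from B_f to B_g: Φ preserves the brackets of B_f and B_g and satisfies Φ∘κ_f = κ_g, Φ∘ι_f = ι_g, σ_g∘Φ = σ_f and ρ_g∘Φ = ρ_f. -/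
variable {K : Type*} [CommRing K]
variable {W₁ W₀ V₁ V₀ U₁ U₀ : Type*}
  [AddCommGroup W₁] [Module K W₁] [AddCommGroup W₀] [Module K W₀]
  [AddCommGroup V₁] [Module K V₁] [AddCommGroup V₀] [Module K V₀]
  [AddCommGroup U₁] [Module K U₁] [AddCommGroup U₀] [Module K U₀]

/-- A transformation `θ` from `g` to `f` gives a morphism of butterflies from
`B_f` to `B_g`, namely `Φ(k,x) := (k + θ(x), x)`: it is `K`-linear, preserves
the brackets, and commutes with the four structure maps. -/
theorem transformation_gives_butterfly_morphism
    {TW : TwoTermL K W₁ W₀} {TV : TwoTermL K V₁ V₀}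
    (f g : TwoTermMor TW TV) (θ : W₀ →ₗ[K] V₁)
    (hθ : IsTransformation g f θ) :
    ∀ Φ : V₁ × W₀ → V₁ × W₀, (∀ p : V₁ × W₀, Φ p = (p.1 + θ p.2, p.2)) →
      IsLinearMap K Φ ∧
      (∀ p q : V₁ × W₀, Φ (bfBr f p q) = bfBr g (Φ p) (Φ q)) ∧
      (∀ l : W₁, Φ (bfκ f l) = bfκ g l) ∧
      (∀ k : V₁, Φ (bfι k) = bfι k) ∧
      (∀ p : V₁ × W₀, bfσ (Φ p) = bfσ p) ∧
      (∀ p : V₁ × W₀, bfρ g (Φ p) = bfρ f p) := by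
  obtain ⟨h0, h1, h2⟩ := hθ
  intro Φ hΦ
  refine ⟨⟨?_, ?_⟩, ?_, ?_, ?_, ?_, ?_⟩
  · intro p q
    simp [hΦ, Prod.ext_iff, map_add]
    abel
  · intro c p
    simp [hΦ, Prod.ext_iff, map_smul, Prod.smul_def]
  · intro p q
    obtain ⟨k, x⟩ := p
    obtain ⟨l, y⟩ := q
    have e1 : f.f₀ x = g.f₀ x + TV.d (θ x) := by rw [← h0 x]; abel
    have e2 : f.f₀ y = g.f₀ y + TV.d (θ y) := by rw [← h0 y]; abel
    have e3 : TV.br01 (TV.d (θ x)) (θ y)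
        = θ (TW.br0 x y) + (f.ε x y - g.ε x y + TV.br01 (g.f₀ y) (θ x)
            + TV.br10 (θ y) (g.f₀ x)) := by
      rw [← h2 x y]; abel
    have e4 : TV.br01 (g.f₀ x) (θ y) = - TV.br10 (θ y) (g.f₀ x) :=
      TV.br01_antisymm _ _
    have e5 : TV.br10 (θ x) (g.f₀ y) = - TV.br01 (g.f₀ y) (θ x) := by
      rw [TV.br01_antisymm]; abel
    have e6 : TV.br01 (TV.d k) (θ y) = TV.br10 k (TV.d (θ y)) :=
      TV.br01_d k (θ y)
    simp only [hΦ, bfBr, Prod.ext_iff, map_add, LinearMap.add_apply,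
      e1, e2, e3, e4, e5, e6]
    constructor
    · abel
    · trivial
  · intro l
    simp only [hΦ, bfκ, Prod.ext_iff]
    constructor
    · rw [← h1 l]; abel
    · trivial
  · intro k
    simp [hΦ, bfι]
  · intro p
    simp [hΦ, bfσ]
  · intro p
    simp only [hΦ, bfρ, map_add]
    rw [show f.f₀ p.2 = g.f₀ p.2 + TV.d (θ p.2) by rw [← h0 p.2]; abel]
    abel
end

section
/- Let f = (f₀,f₁,ε_f) and g = (g₀,g₁,ε_g) be morphisms of 2-term L∞-algebras from 𝕎 to 𝕍 over a commutative unital ring K, and let Φ : V₁ ⊕ W₀ → V₁ ⊕ W₀ be a morphism of butterflies from B_f to B_g. Then there is a unique K-linear map θ : W₀ → V₁ such that Φ(k,x) = (k + θ(x), x) for all (k,x) ∈ V₁ ⊕ W₀, and this θ is a transformation from g to f. -/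
variable {K : Type*} [CommRing K]
variable {W₁ W₀ V₁ V₀ U₁ U₀ : Type*}
  [AddCommGroup W₁] [Module K W₁] [AddCommGroup W₀] [Module K W₀]
  [AddCommGroup V₁] [Module K V₁] [AddCommGroup V₀] [Module K V₀]
  [AddCommGroup U₁] [Module K U₁] [AddCommGroup U₀] [Module K U₀]

/-- Conversely, every morphism of butterflies `Φ : B_f → B_g` is of the form
`Φ(k,x) = (k + θ(x), x)` for a unique `K`-linear `θ : W₀ → V₁`, and any such
`θ` is a transformation from `g` to `f`. -/
theorem butterfly_morphism_gives_transformation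
    {TW : TwoTermL K W₁ W₀} {TV : TwoTermL K V₁ V₀}
    (f g : TwoTermMor TW TV) (Φ : (V₁ × W₀) →ₗ[K] (V₁ × W₀))
    (hbr : ∀ p q : V₁ × W₀, Φ (bfBr f p q) = bfBr g (Φ p) (Φ q))
    (hκ : ∀ l : W₁, Φ (bfκ f l) = bfκ g l)
    (hι : ∀ k : V₁, Φ (bfι k) = bfι k)
    (hσ : ∀ p : V₁ × W₀, bfσ (Φ p) = bfσ p)
    (hρ : ∀ p : V₁ × W₀, bfρ g (Φ p) = bfρ f p) :
    (∃! θ : W₀ →ₗ[K] V₁, ∀ (k : V₁) (x : W₀), Φ (k, x) = (k + θ x, x)) ∧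
    (∀ θ : W₀ →ₗ[K] V₁, (∀ (k : V₁) (x : W₀), Φ (k, x) = (k + θ x, x)) →
      IsTransformation g f θ) := by

  set θ : W₀ →ₗ[K] V₁ :=
    (LinearMap.fst K V₁ W₀).comp (Φ.comp (LinearMap.inr K V₁ W₀)) with hθ
  have key : ∀ (k : V₁) (x : W₀), Φ (k, x) = (k + θ x, x) := by
    intro k x
    have h1 : (k, x) = ((k, 0) : V₁ × W₀) + (0, x) := by simp
    have h2 : Φ (k, 0) = (k, (0 : W₀)) := hι k
    have h3 : (Φ (0, x)).2 = x := hσ (0, x)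
    have h4 : (Φ (0, x)).1 = θ x := by simp [hθ]
    rw [h1, map_add, h2]
    have : Φ (0, x) = (θ x, x) := by
      ext
      · exact h4
      · exact h3
    rw [this]
    simp
  constructor
  · refine ⟨θ, key, ?_⟩
    intro ψ hψ
    ext x
    have := (hψ 0 x).symm.trans (key 0 x)
    have := congrArg Prod.fst this
    simpa using this
  · intro ψ hψ
    have hψθ : ∀ x : W₀, ψ x = θ x := by
      intro x
      have := (hψ 0 x).symm.trans (key 0 x)
      have := congrArg Prod.fst this
      simpa using this
    have c1 : ∀ x : W₀, f.f₀ x - g.f₀ x = TV.d (ψ x) := by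
      intro x
      have h := hρ (0, x)
      rw [key 0 x] at h
      simp only [bfρ, map_zero, zero_add, hψθ] at h ⊢
      rw [← h]; abel
    refine ⟨c1, ?_, ?_⟩
    · intro h
      have hk := hκ h
      rw [show bfκ f h = (-(f.f₁ h), TW.d h) from rfl, key] at hk
      have := congrArg Prod.fst hk
      simp only [bfκ] at this
      rw [hψθ]
      linear_combination (norm := abel) -this
    · intro x y
      have hb := hbr (0, x) (0, y)
      have lhs : bfBr f (0, x) (0, y) = (f.ε x y, TW.br0 x y) := by
        simp [bfBr]
      rw [lhs, key, key 0 x, key 0 y] at hb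
      have hb1 := congrArg Prod.fst hb
      simp only [bfBr, zero_add] at hb1
      have a1 : TV.br01 (g.f₀ y) (θ x) = - TV.br10 (θ x) (g.f₀ y) :=
        TV.br01_antisymm _ _
      have a2 : TV.br01 (g.f₀ x) (θ y) = - TV.br10 (θ y) (g.f₀ x) :=
        TV.br01_antisymm _ _
      simp only [hψθ]
      linear_combination (norm := abel) -hb1 - a1 - a2
end

section
/- Let B = (E, κ, ι, σ, ρ) : 𝕎 → 𝕍 be a butterfly between 2-term L∞-algebras over a commutative unital ring K. Then: (i) for every l ∈ ker ∂_W ⊆ W₁ there is a unique element H₁(B)(l) ∈ V₁ with ι(H₁(B)(l)) = κ(l), this element lies in ker ∂_V, and H₁(B) : ker ∂_W → ker ∂_V is K-linear; (ii) for x ∈ W₀, choosing any e ∈ E with σ(e) = x, the class of ρ(e) in V₀/∂(V₁) is independent of the choice of e and of the representative of x modulo ∂(W₁), yielding a well-defined K-linear map H₀(B) : W₀/∂(W₁) → V₀/∂(V₁); (iii) the brackets on W₀ and V₀ descend to well-defined brackets on W₀/∂(W₁) and V₀/∂(V₁), and H₀(B) preserves them: H₀(B)([x,y] mod ∂W₁)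 = [H₀(B)(x mod ∂W₁), H₀(B)(y mod ∂W₁)]; and (iv) H₁(B) is equivariant over H₀(B): for x ∈ W₀, l ∈ ker ∂_W, and any e ∈ E with σ(e) = x, one has H₁(B)([x,l]) = [ρ(e), H₁(B)(l)]. -/
variable {K : Type*} [CommRing K]
variable {W₁ W₀ V₁ V₀ U₁ U₀ : Type*}
  [AddCommGroup W₁] [Module K W₁] [AddCommGroup W₀] [Module K W₀]
  [AddCommGroup V₁] [Module K V₁] [AddCommGroup V₀] [Module K V₀]
  [AddCommGroup U₁] [Module K U₁] [AddCommGroup U₀] [Module K U₀]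

/-- A butterfly `B : 𝕎 → 𝕍` induces a `K`-linear map
`H₁(B) : ker ∂_W → ker ∂_V` (characterized by `ι(H₁(B)(l)) = κ(l)`, which
determines it uniquely) and a well-defined `K`-linear map
`H₀(B) : W₀/∂(W₁) → V₀/∂(V₁)` (sending the class of `σ(e)` to the class of
`ρ(e)`); the brackets descend to the quotients `W₀/∂(W₁)` and `V₀/∂(V₁)` and
`H₀(B)` preserves them, and `H₁(B)` is equivariant over `H₀(B)`. -/
theorem butterfly_homology_maps
    {TW : TwoTermL K W₁ W₀} {TV : TwoTermL K V₁ V₀} {E : Type*}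
    [AddCommGroup E] [Module K E] (B : Butterfly TW TV E) :
    ∃ (h1 : ↥(LinearMap.ker TW.d) →ₗ[K] ↥(LinearMap.ker TV.d))
      (h0 : (W₀ ⧸ LinearMap.range TW.d) →ₗ[K] (V₀ ⧸ LinearMap.range TV.d)),
      -- (i) characterization and uniqueness of H₁(B)
      (∀ l : LinearMap.ker TW.d, B.ι ((h1 l : V₁)) = B.κ (l : W₁)) ∧
      (∀ (l : LinearMap.ker TW.d) (k : V₁),
        B.ι k = B.κ (l : W₁) → k = (h1 l : V₁)) ∧
      -- (ii) characterization (hence well-definedness) of H₀(B)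
      (∀ e : E,
        h0 (Submodule.Quotient.mk (B.σ e)) = Submodule.Quotient.mk (B.ρ e)) ∧
      -- (iii) the brackets descend to the quotients ...
      (∀ x x' y y' : W₀, x - x' ∈ LinearMap.range TW.d →
        y - y' ∈ LinearMap.range TW.d →
          TW.br0 x y - TW.br0 x' y' ∈ LinearMap.range TW.d) ∧
      (∀ v v' w w' : V₀, v - v' ∈ LinearMap.range TV.d →
        w - w' ∈ LinearMap.range TV.d →
          TV.br0 v w - TV.br0 v' w' ∈ LinearMap.range TV.d) ∧
      -- ... and H₀(B) preserves the descended brackets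
      (∀ (x y : W₀) (e e' : E), B.σ e = x → B.σ e' = y →
        h0 (Submodule.Quotient.mk (TW.br0 x y))
          = Submodule.Quotient.mk (TV.br0 (B.ρ e) (B.ρ e'))) ∧
      -- (iv) H₁(B) is equivariant over H₀(B)
      (∀ (x : W₀) (l : W₁) (e : E), TW.d l = 0 → B.σ e = x →
        ∀ k k' : V₁, B.ι k = B.κ l → B.ι k' = B.κ (TW.br01 x l) →
          k' = TV.br01 (B.ρ e) k) := by
  classical
  -- ### H₁
  have hκmem : ∀ l : LinearMap.ker TW.d, B.κ (l : W₁) ∈ LinearMap.range B.ι := by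
    intro l
    rw [← B.ker_σ_eq_range_ι, LinearMap.mem_ker, B.σ_κ, l.2]
  let eι : V₁ ≃ₗ[K] LinearMap.range B.ι := LinearEquiv.ofInjective B.ι B.ι_inj
  let κres : LinearMap.ker TW.d →ₗ[K] LinearMap.range B.ι :=
    LinearMap.codRestrict _ (B.κ.comp (LinearMap.ker TW.d).subtype) hκmem
  let h1pre : LinearMap.ker TW.d →ₗ[K] V₁ := eι.symm.toLinearMap.comp κres
  have h1char : ∀ l : LinearMap.ker TW.d, B.ι (h1pre l) = B.κ (l : W₁) := by
    intro l
    have h2 : (eι (eι.symm (κres l)) : E) = ((κres l : LinearMap.range B.ι) : E) :=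
      congrArg Subtype.val (eι.apply_symm_apply (κres l))
    simp only [eι, LinearEquiv.ofInjective_apply] at h2
    exact h2
  have h1ker : ∀ l : LinearMap.ker TW.d, TV.d (h1pre l) = 0 := by
    intro l
    have := B.ρ_ι (h1pre l)
    rw [h1char l, B.ρ_κ] at this
    exact this.symm
  let h1 : LinearMap.ker TW.d →ₗ[K] LinearMap.ker TV.d :=
    LinearMap.codRestrict _ h1pre h1ker
  -- ### H₀
  have hrange_le : LinearMap.range B.ι ≤ LinearMap.ker B.σ := le_of_eq B.ker_σ_eq_range_ι.symm
  let σbar : (E ⧸ LinearMap.range B.ι) →ₗ[K] W₀ :=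
    Submodule.liftQ _ B.σ hrange_le
  have σbar_bij : Function.Bijective σbar := by
    constructor
    · rw [← LinearMap.ker_eq_bot]
      exact Submodule.ker_liftQ_eq_bot _ _ _ (le_of_eq B.ker_σ_eq_range_ι)
    · intro x
      obtain ⟨e, he⟩ := B.σ_surj x
      exact ⟨Submodule.Quotient.mk e, he⟩
  let σeq : (E ⧸ LinearMap.range B.ι) ≃ₗ[K] W₀ := LinearEquiv.ofBijective σbar σbar_bij
  let g' : (E ⧸ LinearMap.range B.ι) →ₗ[K] (V₀ ⧸ LinearMap.range TV.d) :=
    Submodule.liftQ _ ((LinearMap.range TV.d).mkQ.comp B.ρ) (by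
      rintro _ ⟨k, rfl⟩
      simp only [LinearMap.mem_ker, LinearMap.comp_apply, B.ρ_ι,
        Submodule.mkQ_apply, Submodule.Quotient.mk_eq_zero]
      exact ⟨k, rfl⟩)
  let h0pre : W₀ →ₗ[K] (V₀ ⧸ LinearMap.range TV.d) := g'.comp σeq.symm.toLinearMap
  have h0pre_char : ∀ e : E, h0pre (B.σ e) = Submodule.Quotient.mk (B.ρ e) := by
    intro e
    have hsy : σeq.symm (B.σ e) = Submodule.Quotient.mk e := by
      apply σeq.injective
      rw [σeq.apply_symm_apply]
      rfl
    simp only [h0pre, LinearMap.comp_apply, LinearEquiv.coe_coe, hsy]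
    rfl
  have h0pre_ker : ∀ x ∈ LinearMap.range TW.d, h0pre x = 0 := by
    rintro _ ⟨m, rfl⟩
    have : TW.d m = B.σ (B.κ m) := (B.σ_κ m).symm
    rw [this, h0pre_char, B.ρ_κ]
    simp
  let h0 : (W₀ ⧸ LinearMap.range TW.d) →ₗ[K] (V₀ ⧸ LinearMap.range TV.d) :=
    Submodule.liftQ _ h0pre (fun x hx => h0pre_ker x hx)
  have h0char : ∀ e : E,
      h0 (Submodule.Quotient.mk (B.σ e)) = Submodule.Quotient.mk (B.ρ e) := by
    intro e
    have : h0 (Submodule.Quotient.mk (B.σ e)) = h0pre (B.σ e) := rfl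
    rw [this, h0pre_char]
  refine ⟨h1, h0, ?_, ?_, h0char, ?_, ?_, ?_, ?_⟩
  · intro l; exact h1char l
  · intro l k hk
    apply B.ι_inj
    rw [hk]
    exact (h1char l).symm
  · -- W₀ bracket descends
    intro x x' y y' hx hy
    obtain ⟨m, hm⟩ := hx
    obtain ⟨n, hn⟩ := hy
    refine ⟨TW.br01 x' n - TW.br01 y m, ?_⟩
    rw [map_sub, TW.d_br01, TW.d_br01, hm, hn, map_sub,
      (TW.br0 y).map_sub, TW.br0_antisymm y x, TW.br0_antisymm y x']
    abel
  · -- V₀ bracket descends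
    intro x x' y y' hx hy
    obtain ⟨m, hm⟩ := hx
    obtain ⟨n, hn⟩ := hy
    refine ⟨TV.br01 x' n - TV.br01 y m, ?_⟩
    rw [map_sub, TV.d_br01, TV.d_br01, hm, hn, map_sub,
      (TV.br0 y).map_sub, TV.br0_antisymm y x, TV.br0_antisymm y x']
    abel
  · -- bracket preservation
    intro x y e e' he he'
    have : TW.br0 x y = B.σ (B.br e e') := by rw [B.σ_br, he, he']
    rw [this, h0char, B.ρ_br]
  · -- equivariance
    intro x l e hl he k k' hk hk'
    apply B.ι_inj
    rw [hk', ← he, ← B.br_κ, ← hk, B.br_ι]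
end

section
/- Let B = (E, κ, ι, σ, ρ) : 𝕎 → 𝕍 be a butterfly between 2-term L∞-algebras over a commutative unital ring K. Then the 7-term sequence 0 → ker κ → ker ∂_W → ker ∂_V → (ker ρ)/κ(W₁) → W₀/∂(W₁) → V₀/∂(V₁) → V₀/ρ(E) → 0 is exact, where the maps are: the inclusion ker κ ⊆ ker ∂_W (valid since σ∘κ = ∂_W); H₁(B), sending l ∈ ker ∂_W to the unique k ∈ V₁ with ι(k) = κ(l); the map k ↦ (ι(k) mod κ(W₁)) (valid since ρ∘ι = ∂_V, so ι(ker ∂_V) ⊆ ker ρ, and ρ∘κ = 0, so κ(W₁) ⊆ ker ρ); the map (e mod κ(W₁)) ↦ (σ(e) mod ∂(W₁)); the well-defined map H₀(B) sending (x mod ∂W₁) to (ρ(e) mod ∂V₁) for any e with σ(e) = x; and the canonical projection V₀/∂(V₁) → V₀/ρ(E) (valid since ∂(V₁) = ρ(ι(V₁)) ⊆ ρ(E)). -/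
variable {K : Type*} [CommRing K]
variable {W₁ W₀ V₁ V₀ U₁ U₀ : Type*}
  [AddCommGroup W₁] [Module K W₁] [AddCommGroup W₀] [Module K W₀]
  [AddCommGroup V₁] [Module K V₁] [AddCommGroup V₀] [Module K V₀]
  [AddCommGroup U₁] [Module K U₁] [AddCommGroup U₀] [Module K U₀]

/-- The 7-term long exact sequence of a butterfly `B : 𝕎 → 𝕍`:
`0 → ker κ → ker ∂_W → ker ∂_V → (ker ρ)/κ(W₁) → W₀/∂(W₁) → V₀/∂(V₁) → V₀/ρ(E) → 0`,
stated elementwise at each spot. -/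
theorem butterfly_seven_term_exact
    {TW : TwoTermL K W₁ W₀} {TV : TwoTermL K V₁ V₀} {E : Type*}
    [AddCommGroup E] [Module K E] (B : Butterfly TW TV E) :
    -- the inclusion `ker κ ⊆ ker ∂_W` is valid
    (∀ l : W₁, B.κ l = 0 → TW.d l = 0) ∧
    -- exactness at `ker ∂_W`: `H₁(B)(l) = 0` iff `l ∈ ker κ`
    (∀ l : W₁, TW.d l = 0 → ∀ k : V₁, B.ι k = B.κ l → (k = 0 ↔ B.κ l = 0)) ∧
    -- exactness at `ker ∂_V`: `ι(k) ∈ κ(W₁)` iff `k` is in the image of `H₁(B)`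
    (∀ k : V₁, TV.d k = 0 →
      ((∃ l : W₁, B.ι k = B.κ l) ↔ ∃ l : W₁, TW.d l = 0 ∧ B.ι k = B.κ l)) ∧
    -- exactness at `(ker ρ)/κ(W₁)`
    (∀ e : E, B.ρ e = 0 →
      ((B.σ e ∈ LinearMap.range TW.d) ↔
        ∃ k : V₁, TV.d k = 0 ∧ ∃ l : W₁, e - B.ι k = B.κ l)) ∧
    -- exactness at `W₀/∂(W₁)`: `H₀(B)(x mod ∂W₁) = 0` iff the class of `x`
    -- comes from `(ker ρ)/κ(W₁)`
    (∀ (x : W₀) (e : E), B.σ e = x →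
      ((B.ρ e ∈ LinearMap.range TV.d) ↔
        ∃ e' : E, B.ρ e' = 0 ∧ x - B.σ e' ∈ LinearMap.range TW.d)) ∧
    -- exactness at `V₀/∂(V₁)`: the class of `v` dies in `V₀/ρ(E)` iff it is
    -- in the image of `H₀(B)`
    (∀ v : V₀, (v ∈ LinearMap.range B.ρ) ↔
      ∃ e : E, v - B.ρ e ∈ LinearMap.range TV.d) ∧
    -- surjectivity onto `V₀/ρ(E)`
    (∀ c : V₀ ⧸ LinearMap.range B.ρ, ∃ v : V₀, Submodule.Quotient.mk v = c) := by
  have kerσ : ∀ a : E, B.σ a = 0 → ∃ k : V₁, B.ι k = a := by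
    intro a ha
    have : a ∈ LinearMap.ker B.σ := ha
    rw [B.ker_σ_eq_range_ι] at this
    exact this
  refine ⟨?_, ?_, ?_, ?_, ?_, ?_, ?_⟩
  · intro l hl
    rw [← B.σ_κ, hl, map_zero]
  · intro l _ k hk
    constructor
    · intro h; rw [← hk, h, map_zero]
    · intro h; apply B.ι_inj; rw [hk, h, map_zero]
  · intro k _
    constructor
    · rintro ⟨l, hl⟩
      refine ⟨l, ?_, hl⟩
      have : B.σ (B.ι k) = B.σ (B.κ l) := by rw [hl]
      rw [B.σ_ι, B.σ_κ] at this
      exact this.symm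
    · rintro ⟨l, _, hl⟩; exact ⟨l, hl⟩
  · intro e he
    constructor
    · rintro ⟨l, hl⟩
      have hσ : B.σ (e - B.κ l) = 0 := by
        rw [map_sub, B.σ_κ, hl, sub_self]
      obtain ⟨k, hk⟩ := kerσ _ hσ
      refine ⟨k, ?_, l, ?_⟩
      · have : B.ρ (B.ι k) = B.ρ e - B.ρ (B.κ l) := by rw [hk, map_sub]
        rw [B.ρ_ι, he, B.ρ_κ, sub_zero] at this
        exact this
      · rw [hk]; abel
    · rintro ⟨k, _, l, hl⟩
      refine ⟨l, ?_⟩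
      have : B.σ (e - B.ι k) = B.σ (B.κ l) := by rw [hl]
      rw [map_sub, B.σ_ι, sub_zero, B.σ_κ] at this
      exact this.symm
  · intro x e he
    constructor
    · rintro ⟨k, hk⟩
      refine ⟨e - B.ι k, ?_, ?_⟩
      · rw [map_sub, B.ρ_ι, hk, sub_self]
      · rw [map_sub, B.σ_ι, sub_zero, he, sub_self]
        exact zero_mem _
    · rintro ⟨e', he', l, hl⟩
      have hσ : B.σ (e - e' - B.κ l) = 0 := by
        rw [map_sub, map_sub, B.σ_κ, he, ← hl]; abel
      obtain ⟨k, hk⟩ := kerσ _ hσ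
      refine ⟨k, ?_⟩
      have : B.ρ (B.ι k) = B.ρ e - B.ρ e' - B.ρ (B.κ l) := by
        rw [hk, map_sub, map_sub]
      rw [B.ρ_ι, he', B.ρ_κ, sub_zero, sub_zero] at this
      exact this
  · intro v
    constructor
    · rintro ⟨e, he⟩
      exact ⟨e, by rw [← he, sub_self]; exact zero_mem _⟩
    · rintro ⟨e, k, hk⟩
      refine ⟨e + B.ι k, ?_⟩
      rw [map_add, B.ρ_ι, hk]; abel
  · exact Submodule.Quotient.mk_surjective _
end

section
/- Let X, Y, Z, W be groups, h : X → Y, k : X → Z, f : Y → W, g : Z → W homomorphisms with g∘k = f∘h and f surjective, and let W act on X by group automorphisms so that f(h(w·x)) = w·f(h(x))·w⁻¹ and (f(h(x)))·x' = x·x'·x⁻¹ for all w ∈ W, x, x' ∈ X, and such that h(f(y)·x) = y·h(x)·y⁻¹ for all y ∈ Y, x ∈ X, and k(g(z)·x) = z·k(x)·z⁻¹ for all z ∈ Z, x ∈ X. Then the image N := {(k(x), h(x)) : x ∈ X} is a normal subgroup of the fiber product Z×_W Y := {(z,y) : g(z) = f(y)}, and one sets Z×^X_W Y := (Z×_W Y)/N.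 -/
/-- Let `X, Y, Z, W` be groups, `h : X → Y`, `k : X → Z`, `f : Y → W`,
`g : Z → W` homomorphisms with `g∘k = f∘h` and `f` surjective. Let `W` act on
`X` by automorphisms so that `f∘h : X → W` is a crossed-module (equivariance
and Peiffer identity), `h` is `Y`-equivariant and `k` is `Z`-equivariant.
Then the image `N = {(k(x), h(x)) : x ∈ X}` is a normal subgroup of the fiber
product `Z ×_W Y = {(z,y) : g(z) = f(y)}`. -/
theorem antidiagonal_normal_in_fiber_product
    {X Y Z W : Type*} [Group X] [Group Y] [Group Z] [Group W]
    [MulDistribMulAction W X]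
    (h : X →* Y) (k : X →* Z) (f : Y →* W) (g : Z →* W)
    (hcomm : ∀ x : X, g (k x) = f (h x))
    (hfsurj : Function.Surjective f)
    (hequiv : ∀ (w : W) (x : X), f (h (w • x)) = w * f (h x) * w⁻¹)
    (hpeiffer : ∀ x x' : X, (f (h x)) • x' = x * x' * x⁻¹)
    (hYequiv : ∀ (y : Y) (x : X), h (f y • x) = y * h x * y⁻¹)
    (hZequiv : ∀ (z : Z) (x : X), k (g z • x) = z * k x * z⁻¹) :
    ∃ FP N : Subgroup (Z × Y),
      (∀ p : Z × Y, p ∈ FP ↔ g p.1 = f p.2) ∧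
      (∀ p : Z × Y, p ∈ N ↔ ∃ x : X, p = (k x, h x)) ∧
      N ≤ FP ∧
      (∀ p ∈ FP, ∀ n ∈ N, p * n * p⁻¹ ∈ N) := by

  refine ⟨{ carrier := {p | g p.1 = f p.2},
            one_mem' := by simp,
            mul_mem' := by intro a b ha hb; simp_all [map_mul],
            inv_mem' := by intro a ha; simp_all },
          MonoidHom.range ((k.prod h)),
          fun p => Iff.rfl, ?_, ?_, ?_⟩
  · intro p
    constructor
    · rintro ⟨x, rfl⟩; exact ⟨x, rfl⟩
    · rintro ⟨x, rfl⟩; exact ⟨x, rfl⟩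
  · rintro p ⟨x, rfl⟩
    exact hcomm x
  · rintro ⟨z, y⟩ hp n ⟨x, rfl⟩
    refine ⟨g z • x, ?_⟩
    have hzy : g z = f y := hp
    simp only [MonoidHom.prod_apply, Prod.mk_mul_mk, Prod.inv_mk]
    rw [hZequiv z x, hzy, hYequiv y x]
end

section
/- Let X, Y, Z, W be groups, h : X → Y, k : X → Z, f : Y → W, g : Z → W homomorphisms with g∘k = f∘h and f surjective, and let W act on X by automorphisms so that [f∘h : X → W] is a crossed-module, h is Y-equivariant (h(f(y)·x) = y·h(x)·y⁻¹) and k is Z-equivariant (k(g(z)·x) = z·k(x)·z⁻¹); set Z×^X_W Y := (Z×_W Y)/N where N = {(k(x),h(x)) : x ∈ X}. Let α : W' → W be a homomorphism whose image is normal in W, let W₀ := W/α(W') with quotient map π, and form the pullbacks Y' := {(y,v) ∈ Y×W' : f(y) = α(v)}, Z' := {(z,v) ∈ Z×W' : g(z) = α(v)}, X' := {(x,v) ∈ X×W' : f(h(x)) = α(v)}, with the component-wise maps h'(x,v) = (h(x),v), k'(x,v) = (k(x),v), f'(y,v) = v, g'(z,v) = v. Then: (i) N' := {((k(x),v),(h(x),v))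 : (x,v) ∈ X'} is a normal subgroup of Z'×_{W'}Y' := {((z,v),(y,v)) : v ∈ W', g(z) = α(v) = f(y)}, so Z'×^{X'}_{W'}Y' := (Z'×_{W'}Y')/N' is defined; (ii) writing X₀ := π(f(h(X))) and Z₀ := π(g(Z)), X₀ is a normal subgroup of W₀ contained in Z₀; and (iii) the sequence 1 → Z'×^{X'}_{W'}Y' → Z×^X_W Y → Z₀/X₀ → 1 is exact, where the first map is induced by ((z,v),(y,v)) ↦ (z,y) and the second sends the class of (z,y) to the coset π(g(z))·X₀. -/
/-- Pulling back the data `(X, Y, Z, W, h, k, f, g)` of a crossed-module-type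
square along a homomorphism `α : W' → W` with normal image, let
`W₀ := W/α(W')`, `X₀ := π(f(h(X)))`, `Z₀ := π(g(Z))`, let
`FP = Z ×_W Y`, `N = {(k x, h x)}`, and let `FP'`, `N'` be the corresponding
subgroups for the pulled-back data `(X', Y', Z', W')`. Then `N'` is normal in
`FP'` (so `Z'×^{X'}_{W'}Y'` is defined), `X₀` is a normal subgroup of `W₀`
contained in `Z₀`, and the sequence
`1 → Z'×^{X'}_{W'}Y' → Z×^X_W Y → Z₀/X₀ → 1` is exact, where the first map is
induced by `((z,v),(y,v)) ↦ (z,y)` and the second sends the class of `(z,y)`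
to the coset `π(g(z))·X₀` (everything stated elementwise on the level of
coset representatives). -/
theorem pullback_quotient_exact_sequence
    {X Y Z W W' : Type*} [Group X] [Group Y] [Group Z] [Group W] [Group W']
    [MulDistribMulAction W X]
    (h : X →* Y) (k : X →* Z) (f : Y →* W) (g : Z →* W)
    (hcomm : ∀ x : X, g (k x) = f (h x))
    (hfsurj : Function.Surjective f)
    (hequiv : ∀ (w : W) (x : X), f (h (w • x)) = w * f (h x) * w⁻¹)
    (hpeiffer : ∀ x x' : X, (f (h x)) • x' = x * x' * x⁻¹)
    (hYequiv : ∀ (y : Y) (x : X), h (f y • x) = y * h x * y⁻¹)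
    (hZequiv : ∀ (z : Z) (x : X), k (g z • x) = z * k x * z⁻¹)
    (α : W' →* W) [hα : α.range.Normal] :
    ∃ (FP N : Subgroup (Z × Y))
      (FP' N' : Subgroup ((Z × W') × (Y × W')))
      (X₀ Z₀ : Subgroup (W ⧸ α.range)),
      -- identification of the six subgroups
      (∀ p : Z × Y, p ∈ FP ↔ g p.1 = f p.2) ∧
      (∀ p : Z × Y, p ∈ N ↔ ∃ x : X, p = (k x, h x)) ∧
      (∀ q : (Z × W') × (Y × W'), q ∈ FP' ↔
        q.1.2 = q.2.2 ∧ g q.1.1 = α q.1.2 ∧ f q.2.1 = α q.2.2) ∧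
      (∀ q : (Z × W') × (Y × W'), q ∈ N' ↔
        ∃ (x : X) (v : W'), f (h x) = α v ∧ q = ((k x, v), (h x, v))) ∧
      (∀ w₀ : W ⧸ α.range, w₀ ∈ X₀ ↔
        ∃ x : X, w₀ = QuotientGroup.mk' α.range (f (h x))) ∧
      (∀ w₀ : W ⧸ α.range, w₀ ∈ Z₀ ↔
        ∃ z : Z, w₀ = QuotientGroup.mk' α.range (g z)) ∧
      -- `N` is normal in `FP` and `N'` is normal in `FP'`, so the quotients
      -- `Z×^X_W Y` and `Z'×^{X'}_{W'}Y'` are defined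
      N ≤ FP ∧ (∀ p ∈ FP, ∀ n ∈ N, p * n * p⁻¹ ∈ N) ∧
      N' ≤ FP' ∧ (∀ q ∈ FP', ∀ n ∈ N', q * n * q⁻¹ ∈ N') ∧
      -- (ii) `X₀` is a normal subgroup of `W₀` contained in `Z₀`
      X₀.Normal ∧ X₀ ≤ Z₀ ∧
      -- (iii) exactness of `1 → Z'×^{X'}_{W'}Y' → Z×^X_W Y → Z₀/X₀ → 1`:
      -- the first map is well defined ...
      (∀ q ∈ FP', ((q.1.1, q.2.1) : Z × Y) ∈ FP) ∧
      -- ... and injective on `N'`-cosets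
      (∀ q ∈ FP', ∀ q' ∈ FP',
        ((q.1.1, q.2.1) : Z × Y)⁻¹ * (q'.1.1, q'.2.1) ∈ N → q⁻¹ * q' ∈ N') ∧
      -- the second map is well defined on `N`-cosets ...
      (∀ n ∈ N, QuotientGroup.mk' α.range (g n.1) ∈ X₀) ∧
      -- ... its "kernel" is exactly the image of the first map
      (∀ p ∈ FP, (QuotientGroup.mk' α.range (g p.1) ∈ X₀ ↔
        ∃ q ∈ FP', p⁻¹ * ((q.1.1, q.2.1) : Z × Y) ∈ N)) ∧
      -- ... and it is surjective onto `Z₀/X₀`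
      (∀ w₀ ∈ Z₀, ∃ p ∈ FP, (QuotientGroup.mk' α.range (g p.1))⁻¹ * w₀ ∈ X₀) := by
  set π := QuotientGroup.mk' α.range with hπ
  refine ⟨
    { carrier := {p : Z × Y | g p.1 = f p.2}
      one_mem' := by simp
      mul_mem' := by
        intro a b ha hb
        simp only [Set.mem_setOf_eq] at *
        simp [ha, hb]
      inv_mem' := by
        intro a ha
        simp only [Set.mem_setOf_eq] at *
        simp [ha] },
    (k.prod h).range,
    { carrier := {q : (Z × W') × (Y × W') |
        q.1.2 = q.2.2 ∧ g q.1.1 = α q.1.2 ∧ f q.2.1 = α q.2.2}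
      one_mem' := by simp
      mul_mem' := by
        rintro a b ⟨ha1, ha2, ha3⟩ ⟨hb1, hb2, hb3⟩
        exact ⟨by simp [Prod.snd_mul, ha1, hb1],
          by simp [Prod.fst_mul, Prod.snd_mul, ha2, hb2],
          by simp [Prod.fst_mul, Prod.snd_mul, ha3, hb3]⟩
      inv_mem' := by
        rintro a ⟨h1, h2, h3⟩
        exact ⟨by simp [h1], by simp [h2], by simp [h3]⟩ },
    { carrier := {q : (Z × W') × (Y × W') |
        ∃ (x : X) (v : W'), f (h x) = α v ∧ q = ((k x, v), (h x, v))}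
      one_mem' := ⟨1, 1, by simp, by simp [Prod.ext_iff]⟩
      mul_mem' := by
        rintro a b ⟨x, v, hx, rfl⟩ ⟨x', v', hx', rfl⟩
        exact ⟨x * x', v * v', by simp [hx, hx'], by simp [Prod.ext_iff]⟩
      inv_mem' := by
        rintro a ⟨x, v, hx, rfl⟩
        exact ⟨x⁻¹, v⁻¹, by simp [hx], by simp [Prod.ext_iff]⟩ },
    (π.comp (f.comp h)).range, (π.comp g).range,
    fun p => Iff.rfl, ?_, fun q => Iff.rfl, fun q => Iff.rfl, ?_, ?_,
    ?_, ?_, ?_, ?_, ?_, ?_, ?_, ?_, ?_, ?_, ?_⟩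
  · -- N membership
    intro p
    constructor
    · rintro ⟨x, rfl⟩; exact ⟨x, rfl⟩
    · rintro ⟨x, rfl⟩; exact ⟨x, rfl⟩
  · -- X₀ membership
    intro w₀
    constructor
    · rintro ⟨x, rfl⟩; exact ⟨x, rfl⟩
    · rintro ⟨x, rfl⟩; exact ⟨x, rfl⟩
  · -- Z₀ membership
    intro w₀
    constructor
    · rintro ⟨z, rfl⟩; exact ⟨z, rfl⟩
    · rintro ⟨z, rfl⟩; exact ⟨z, rfl⟩
  · -- N ≤ FP
    rintro p ⟨x, rfl⟩
    exact hcomm x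
  · -- N normal in FP
    rintro p hp n ⟨x, rfl⟩
    refine ⟨g p.1 • x, ?_⟩
    have h1 : k (g p.1 • x) = p.1 * k x * p.1⁻¹ := hZequiv p.1 x
    have h2 : h (g p.1 • x) = p.2 * h x * p.2⁻¹ := by
      rw [hp]; exact hYequiv p.2 x
    have : (k.prod h) ((g p.1) • x) = (p.1 * k x * p.1⁻¹, p.2 * h x * p.2⁻¹) := by
      simp [MonoidHom.prod_apply, h1, h2]
    rw [this]
    ext <;> simp [Prod.fst_mul, Prod.snd_mul]
  · -- N' ≤ FP'
    rintro q ⟨x, v, hx, rfl⟩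
    exact ⟨rfl, by simpa [hcomm x] using hx, hx⟩
  · -- N' normal in FP'
    rintro q ⟨hq1, hq2, hq3⟩ n ⟨x, v, hx, rfl⟩
    refine ⟨g q.1.1 • x, q.1.2 * v * q.1.2⁻¹, ?_, ?_⟩
    · rw [hequiv, hx, hq2, map_mul, map_mul, map_inv]
    · have h1 : k (g q.1.1 • x) = q.1.1 * k x * q.1.1⁻¹ := hZequiv q.1.1 x
      have h2 : h (g q.1.1 • x) = q.2.1 * h x * q.2.1⁻¹ := by
        rw [hq2, hq1, ← hq3]; exact hYequiv q.2.1 x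
      ext <;> simp [Prod.fst_mul, Prod.snd_mul, h1, h2, hq1]
  · -- X₀ normal
    constructor
    rintro _ ⟨x, rfl⟩ w₀
    induction w₀ using QuotientGroup.induction_on with
    | H w =>
      refine ⟨w • x, ?_⟩
      simp only [MonoidHom.comp_apply, hπ]
      rw [hequiv]
      simp [QuotientGroup.mk_mul]
  · -- X₀ ≤ Z₀
    rintro _ ⟨x, rfl⟩
    exact ⟨k x, by simp [hcomm x]⟩
  · -- first map well-defined
    rintro q ⟨hq1, hq2, hq3⟩
    show g q.1.1 = f q.2.1
    rw [hq2, hq3, hq1]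
  · -- injectivity on cosets
    rintro q ⟨hq1, hq2, hq3⟩ q' ⟨hq1', hq2', hq3'⟩ ⟨x, hx⟩
    have hx1 : k x = q.1.1⁻¹ * q'.1.1 := by
      have := congrArg Prod.fst hx; simpa using this
    have hx2 : h x = q.2.1⁻¹ * q'.2.1 := by
      have := congrArg Prod.snd hx; simpa using this
    refine ⟨x, q.2.2⁻¹ * q'.2.2, ?_, ?_⟩
    · simp [hx2, map_mul, map_inv, hq3, hq3']
    · ext <;>
        simp [Prod.fst_mul, Prod.snd_mul, Prod.fst_inv, Prod.snd_inv,
          hx1, hx2, hq1, hq1']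
  · -- second map well-defined on N
    rintro n ⟨x, rfl⟩
    exact ⟨x, by simp [hcomm x]⟩
  · -- kernel = image
    intro p hp
    constructor
    · rintro ⟨x, hx⟩
      simp only [MonoidHom.comp_apply, hπ] at hx
      rw [QuotientGroup.mk'_eq_mk'] at hx
      obtain ⟨_, ⟨u, rfl⟩, hu⟩ := hx
      have hmem : g p.1 * (f (h x))⁻¹ ∈ α.range := by
        have : g p.1 * (f (h x))⁻¹ = f (h x) * α u * (f (h x))⁻¹ := by
          rw [hu]
        rw [this]
        exact hα.conj_mem _ ⟨u, rfl⟩ _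
      obtain ⟨v, hv⟩ := hmem
      refine ⟨((p.1 * k x⁻¹, v), (p.2 * h x⁻¹, v)), ⟨rfl, ?_, ?_⟩, ?_⟩
      · simp only [map_mul, map_inv, hcomm x]; exact hv.symm
      · have : f p.2 = g p.1 := hp.symm
        simp only [map_mul, map_inv, this]; exact hv.symm
      · refine ⟨x⁻¹, ?_⟩
        ext <;> simp [Prod.fst_mul, Prod.snd_mul]
    · rintro ⟨q, ⟨hq1, hq2, hq3⟩, x, hx⟩
      have hx1 : k x = p.1⁻¹ * q.1.1 := by
        have := congrArg Prod.fst hx; simpa using this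
      refine ⟨x⁻¹, ?_⟩
      have : g p.1 = g q.1.1 * (f (h x))⁻¹ := by
        have : g q.1.1 = g p.1 * g (k x) := by rw [hx1]; simp
        rw [this, hcomm]; group
      have h0 : π (α q.1.2) = 1 :=
        (QuotientGroup.eq_one_iff _).2 ⟨q.1.2, rfl⟩
      simp only [MonoidHom.comp_apply, this, map_mul, map_inv, hq2, h0, one_mul]
  · -- surjectivity
    rintro w₀ ⟨z, rfl⟩
    obtain ⟨y, hy⟩ := hfsurj (g z)
    refine ⟨(z, y), hy.symm, ⟨1, ?_⟩⟩
    simp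
end
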